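/- Let I = (w₁,u₁),…,(wₙ,uₙ) be a PCP instance over Σ and let ⊥ ∉ Σ be a fresh symbol. Define L₁ = {(w_{i₁}⋯w_{iₗ}·⊥^ω, u_{i₁}⋯u_{iₗ}·⊥^ω) : l ≥ 1, i₁,…,iₗ ∈ {1,…,n}} and L₂ = {(v·⊥^ω, v·⊥^ω) : v a finite word over Σ}. Then (i) L₁ and L₂ are each recognized by a NAPA over Σ ∪ {⊥} with two directions, and (ii) I has a solution if and only if L₁ ∩ L₂ ≠ ∅. -/

import Mathlib

/-! ### Positive Boolean formulas -/

/-- Positive Boolean formulas over a set of atoms `Q`, built from atoms,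
conjunction, disjunction and the constants true and false. -/
inductive PosBool (Q : Type u) : Type u
  | tt : PosBool Q
  | ff : PosBool Q
  | var : Q → PosBool Q
  | and : PosBool Q → PosBool Q → PosBool Q
  | or : PosBool Q → PosBool Q → PosBool Q

namespace PosBool

/-- `Sat C f` holds iff the valuation making exactly the elements of `C` true satisfies `f`. -/
def Sat {Q : Type u} (C : Set Q) : PosBool Q → Prop
  | tt => True
  | ff => False
  | var q => q ∈ C
  | and f g => Sat C f ∧ Sat C g
  | or f g => Sat C f ∨ Sat C g

/-- A positive Boolean formula that is a disjunction of atoms. -/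
inductive IsDisj {Q : Type u} : PosBool Q → Prop
  | ff : IsDisj ff
  | var (q : Q) : IsDisj (var q)
  | or {f g : PosBool Q} : IsDisj f → IsDisj g → IsDisj (f.or g)

/-- Syntactic size of a positive Boolean formula. -/
def size {Q : Type u} : PosBool Q → ℕ
  | tt => 1
  | ff => 1
  | var _ => 1
  | and f g => size f + size g + 1
  | or f g => size f + size g + 1

end PosBool

/-! ### Alternating Asynchronous Parity Automata -/

/-- An Alternating Asynchronous Parity Automaton (AAPA) over the alphabet `σ`
with state set `Q` and `n` directions. -/
structure AAPA (σ : Type u) (Q : Type v) (n : ℕ) where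
  init : PosBool Q
  trans : Q → σ → Fin n → PosBool Q
  prio : Q → ℕ

namespace AAPA

variable {σ : Type u} {Q : Type v} {n : ℕ}

/-- A run of an AAPA `A` on the tuple of `ω`-words `w`: a tree of nodes
(coded as lists of natural numbers, the root being `[]`), whose non-root nodes
are labeled with states and which carry offset counters, subject to the
local consistency conditions of AAPA runs. -/
structure Run (A : AAPA σ Q n) (w : Fin n → ℕ → σ) where
  tree : Set (List ℕ)
  label : List ℕ → Q
  cnt : List ℕ → Fin n → ℕ
  root_mem : [] ∈ tree
  prefix_closed : ∀ (t : List ℕ) (m : ℕ), t ++ [m] ∈ tree → t ∈ tree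
  has_child : ∀ t ∈ tree, ∃ m : ℕ, t ++ [m] ∈ tree
  cnt_init : ∀ t ∈ tree, t.length ≤ 1 → cnt t = 0
  init_sat : PosBool.Sat {q | ∃ m : ℕ, [m] ∈ tree ∧ label [m] = q} A.init
  step : ∀ t ∈ tree, t ≠ [] → ∃ d : Fin n,
    (∀ m : ℕ, t ++ [m] ∈ tree →
      cnt (t ++ [m]) = Function.update (cnt t) d (cnt t d + 1)) ∧
    PosBool.Sat {q | ∃ m : ℕ, t ++ [m] ∈ tree ∧ label (t ++ [m]) = q}
      (A.trans (label t) (w d (cnt t d)) d)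

variable {A : AAPA σ Q n} {w : Fin n → ℕ → σ}

/-- An infinite path through a run, starting at the root. -/
def Run.IsPath (r : A.Run w) (p : ℕ → List ℕ) : Prop :=
  p 0 = [] ∧ ∀ i : ℕ, (∃ m : ℕ, p (i + 1) = p i ++ [m]) ∧ p (i + 1) ∈ r.tree

/-- A run is accepting iff on every infinite path the least priority occurring
infinitely often is even. -/
def Run.Accepting (r : A.Run w) : Prop :=
  ∀ p : ℕ → List ℕ, r.IsPath p →
    Even (sInf {c : ℕ | ∀ N : ℕ, ∃ i : ℕ, N ≤ i ∧ A.prio (r.label (p i)) = c})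

/-- The language of an AAPA: the set of tuples of `ω`-words on which it has an
accepting run. -/
def lang (A : AAPA σ Q n) : Set (Fin n → ℕ → σ) :=
  {w | ∃ r : A.Run w, r.Accepting}

/-- A Nondeterministic Asynchronous Parity Automaton (NAPA) is an AAPA whose
initial condition and transitions are disjunctions of states. -/
def IsNondet (A : AAPA σ Q n) : Prop :=
  A.init.IsDisj ∧ ∀ (q : Q) (a : σ) (d : Fin n), (A.trans q a d).IsDisj

end AAPA

/-! ### The Post Correspondence Problem -/

/-- Pad a finite word to an `ω`-word over `Option σ`, where `none` plays the role
of the fresh symbol `⊥`: the word `v` followed by `⊥^ω`. -/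
def padWord {σ : Type u} (v : List σ) : ℕ → Option σ := fun i => v[i]?

/-- A solution of a PCP instance: a nonempty index sequence `i₁,…,iₗ` with
`w_{i₁}⋯w_{iₗ} = u_{i₁}⋯u_{iₗ}`. -/
def PCPSolvable {σ : Type u} (I : List (List σ × List σ)) : Prop :=
  ∃ js : List (Fin I.length), js ≠ [] ∧
    (js.map fun j => (I.get j).1).flatten = (js.map fun j => (I.get j).2).flatten

/-- The language `L₁` of a PCP instance: pairs of padded concatenations of the
first and second components along a common nonempty index sequence. -/
def pcpL₁ {σ : Type u} (I : List (List σ × List σ)) : Set (Fin 2 → ℕ → Option σ) :=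
  {w | ∃ js : List (Fin I.length), js ≠ [] ∧
    w 0 = padWord ((js.map fun j => (I.get j).1).flatten) ∧
    w 1 = padWord ((js.map fun j => (I.get j).2).flatten)}

/-- The language `L₂`: pairs consisting of the same padded finite word twice. -/
def pcpL₂ (σ : Type u) : Set (Fin 2 → ℕ → Option σ) :=
  {w | ∃ v : List σ, w 0 = padWord v ∧ w 1 = padWord v}

section Generic

open PosBool

variable {σ : Type u} {Q : Type v} {n : ℕ}

lemma PosBool.sat_congr {C C' : Set Q} (h : C = C') (f : PosBool Q) :
    Sat C f ↔ Sat C' f := by rw [h]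

lemma PosBool.IsDisj.elim {f : PosBool Q} (hf : IsDisj f) {C : Set Q} (h : Sat C f) :
    ∃ q ∈ C, ∀ (C' : Set Q), q ∈ C' → Sat C' f := by
  induction hf with
  | ff => exact absurd h id
  | var q => exact ⟨q, h, fun C' hq => hq⟩
  | or hf hg ihf ihg =>
    rcases h with h | h
    · obtain ⟨q, hq, hs⟩ := ihf h
      exact ⟨q, hq, fun C' hq' => Or.inl (hs C' hq')⟩
    · obtain ⟨q, hq, hs⟩ := ihg h
      exact ⟨q, hq, fun C' hq' => Or.inr (hs C' hq')⟩

/-- A "big or" of formulas indexed by a list. -/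
def PosBool.bigOr (l : List α) (g : α → PosBool Q) : PosBool Q :=
  l.foldr (fun a f => .or (g a) f) .ff

lemma PosBool.isDisj_bigOr {l : List α} {g : α → PosBool Q}
    (h : ∀ a ∈ l, IsDisj (g a)) : IsDisj (bigOr l g) := by
  induction l with
  | nil => exact IsDisj.ff
  | cons a l ih =>
      exact IsDisj.or (h a List.mem_cons_self) (ih fun b hb => h b (List.mem_cons_of_mem a hb))

lemma PosBool.sat_bigOr {l : List α} {g : α → PosBool Q} {C : Set Q} :
    Sat C (bigOr l g) ↔ ∃ a ∈ l, Sat C (g a) := by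
  induction l with
  | nil => simp [bigOr, Sat]
  | cons a l ih =>
      simp only [bigOr, List.foldr_cons, Sat, List.mem_cons]
      rw [show (List.foldr (fun a f => PosBool.or (g a) f) PosBool.ff l) = bigOr l g from rfl, ih]
      constructor
      · rintro (h | ⟨b, hb, h⟩)
        · exact ⟨a, Or.inl rfl, h⟩
        · exact ⟨b, Or.inr hb, h⟩
      · rintro ⟨b, (rfl | hb), h⟩
        · exact Or.inl h
        · exact Or.inr ⟨b, hb, h⟩

namespace AAPA

variable {A : AAPA σ Q n} {w : Fin n → ℕ → σ}

/-- The one-step relation at the trace level. -/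
def TStep (A : AAPA σ Q n) (w : Fin n → ℕ → σ) (q : Q) (c : Fin n → ℕ)
    (q' : Q) (c' : Fin n → ℕ) : Prop :=
  ∃ d : Fin n, c' = Function.update c d (c d + 1) ∧
    PosBool.Sat {q'} (A.trans q (w d (c d)) d)

/-- From a trace whose priorities are eventually `0`, build an accepting run. -/
lemma lang_of_trace (qs : ℕ → Q) (c : ℕ → Fin n → ℕ)
    (hc0 : c 0 = 0) (hinit : PosBool.Sat {qs 0} A.init)
    (hstep : ∀ k, TStep A w (qs k) (c k) (qs (k + 1)) (c (k + 1)))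
    (hprio : ∃ M, ∀ k, M ≤ k → A.prio (qs k) = 0) :
    w ∈ A.lang := by
  classical
  refine ⟨{ tree := {t | ∀ x ∈ t, x = 0}
            label := fun t => match t.length with | 0 => qs 0 | k + 1 => qs k
            cnt := fun t => match t.length with | 0 => 0 | k + 1 => c k
            root_mem := by simp
            prefix_closed := by
              intro t m h x hx
              exact h x (by simp [hx])
            has_child := by
              intro t ht
              refine ⟨0, fun x hx => ?_⟩
              rcases List.mem_append.1 hx with h | h
              · exact ht x h
              · simpa using h
            cnt_init := ?_
            init_sat := ?_
            step := ?_ }, ?_⟩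
  · intro t ht hlen
    rcases Nat.le_one_iff_eq_zero_or_eq_one.1 hlen with h | h <;> simp [h, hc0]
  · have : {q | ∃ m : ℕ, [m] ∈ {t : List ℕ | ∀ x ∈ t, x = 0} ∧
        (match ([m] : List ℕ).length with | 0 => qs 0 | k + 1 => qs k) = q} = {qs 0} := by
      ext q
      simp only [Set.mem_setOf_eq, Set.mem_singleton_iff, List.length_singleton]
      constructor
      · rintro ⟨m, _, rfl⟩; rfl
      · rintro rfl; exact ⟨0, by simp, rfl⟩
    rw [PosBool.sat_congr this]
    exact hinit
  · intro t ht hne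
    obtain ⟨k, hk⟩ : ∃ k, t.length = k + 1 :=
      ⟨t.length - 1, (Nat.succ_pred_eq_of_pos (List.length_pos_iff.2 hne)).symm⟩
    obtain ⟨d, hd, hsat⟩ := hstep k
    refine ⟨d, ?_, ?_⟩
    · intro m hm
      have h1 : (t ++ [m]).length = k + 1 + 1 := by simp [hk]
      simp only [h1, hk, hd]
    · have hset : {q | ∃ m : ℕ, t ++ [m] ∈ {t : List ℕ | ∀ x ∈ t, x = 0} ∧
          (match (t ++ [m]).length with | 0 => qs 0 | k + 1 => qs k) = q} = {qs (k+1)} := by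
        ext q
        simp only [Set.mem_setOf_eq, Set.mem_singleton_iff]
        constructor
        · rintro ⟨m, _, rfl⟩
          simp [hk]
        · rintro rfl
          refine ⟨0, fun x hx => ?_, by simp [hk]⟩
          rcases List.mem_append.1 hx with h | h
          · exact ht x h
          · simpa using h
      rw [PosBool.sat_congr hset]
      simpa [hk] using hsat
  · intro p hp
    obtain ⟨M, hM⟩ := hprio
    have hlen : ∀ i, (p i).length = i := by
      intro i
      induction i with
      | zero => rw [hp.1]; rfl
      | succ i ih =>
          obtain ⟨⟨m, hm⟩, _⟩ := hp.2 i
          simp [hm, ih]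
    have hlab : ∀ i k, i = k + 1 →
        (match (p i).length with | 0 => qs 0 | k + 1 => qs k) = qs k := by
      intro i k hik
      simp [hlen, hik]
    have hS : {v : ℕ | ∀ N : ℕ, ∃ i : ℕ, N ≤ i ∧
        A.prio (match (p i).length with | 0 => qs 0 | k + 1 => qs k) = v} = {0} := by
      ext v
      simp only [Set.mem_setOf_eq, Set.mem_singleton_iff]
      constructor
      · intro h
        obtain ⟨i, hi, hv⟩ := h (M + 1)
        obtain ⟨k, rfl⟩ : ∃ k, i = k + 1 := ⟨i - 1, by omega⟩
        rw [hlab _ k rfl] at hv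
        rw [← hv]
        exact hM k (by omega)
      · rintro rfl N
        refine ⟨max N M + 1, by omega, ?_⟩
        rw [hlab _ (max N M) rfl]
        exact hM _ (by omega)
    rw [hS]
    have : sInf ({0} : Set ℕ) = 0 := by
      have := Nat.sInf_mem (⟨0, rfl⟩ : ({0} : Set ℕ).Nonempty)
      simpa using this
    rw [this]
    exact Even.zero

/-- From an accepting run of a nondeterministic automaton, extract a trace. -/
lemma exists_trace (hA : A.IsNondet) (hw : w ∈ A.lang) :
    ∃ (qs : ℕ → Q) (c : ℕ → Fin n → ℕ),
      c 0 = 0 ∧ PosBool.Sat {qs 0} A.init ∧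
      (∀ k, TStep A w (qs k) (c k) (qs (k + 1)) (c (k + 1))) ∧
      Even (sInf {v : ℕ | ∀ N : ℕ, ∃ i : ℕ, N ≤ i ∧ A.prio (qs i) = v}) := by
  classical
  obtain ⟨r, hr⟩ := hw
  -- step property for non-root nodes
  have hstepP : ∀ t, t ∈ r.tree → t ≠ [] →
      ∃ m, (t ++ [m] ∈ r.tree ∧ t ++ [m] ≠ []) ∧
        TStep A w (r.label t) (r.cnt t) (r.label (t ++ [m])) (r.cnt (t ++ [m])) := by
    intro t ht hne
    obtain ⟨d, hcnt, hsat⟩ := r.step t ht hne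
    obtain ⟨q, ⟨m, hm, hq⟩, hs⟩ := (hA.2 (r.label t) (w d (r.cnt t d)) d).elim hsat
    refine ⟨m, ⟨hm, by simp⟩, d, hcnt m hm, ?_⟩
    exact hs _ (by simp [hq])
  -- first node
  obtain ⟨q0, ⟨m0, hm0, hq0⟩, hs0⟩ := hA.1.elim r.init_sat
  -- build the path
  let g : ℕ → {t : List ℕ // t ∈ r.tree ∧ t ≠ []} := fun k =>
    Nat.rec ⟨[m0], hm0, by simp⟩
      (fun _ prev => ⟨prev.1 ++ [Classical.choose (hstepP prev.1 prev.2.1 prev.2.2)],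
        (Classical.choose_spec (hstepP prev.1 prev.2.1 prev.2.2)).1⟩) k
  have hg : ∀ k, (g (k + 1)).1 = (g k).1 ++
      [Classical.choose (hstepP (g k).1 (g k).2.1 (g k).2.2)] := fun k => rfl
  refine ⟨fun k => r.label (g k).1, fun k => r.cnt (g k).1, ?_, ?_, ?_, ?_⟩
  · exact r.cnt_init [m0] hm0 (by simp)
  · refine hs0 _ ?_
    have h : (g 0).1 = [m0] := rfl
    show q0 = r.label (g 0).1
    rw [h, hq0]
  · intro k
    have := (Classical.choose_spec (hstepP (g k).1 (g k).2.1 (g k).2.2)).2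
    rw [← hg k] at this
    exact this
  · -- acceptance transferred along the path
    have hpath : r.IsPath (fun i => match i with | 0 => [] | k + 1 => (g k).1) := by
      refine ⟨rfl, fun i => ?_⟩
      match i with
      | 0 => exact ⟨⟨m0, rfl⟩, hm0⟩
      | k + 1 => exact ⟨⟨_, hg k⟩, (g (k+1)).2.1⟩
    have hacc := hr _ hpath
    have hSeq : {v : ℕ | ∀ N : ℕ, ∃ i : ℕ, N ≤ i ∧
        A.prio (r.label (match i with | 0 => ([] : List ℕ) | k + 1 => (g k).1)) = v} =
        {v : ℕ | ∀ N : ℕ, ∃ i : ℕ, N ≤ i ∧ A.prio (r.label (g i).1) = v} := by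
      ext v
      simp only [Set.mem_setOf_eq]
      constructor
      · intro h N
        obtain ⟨i, hi, hv⟩ := h (N + 1)
        match i, hi with
        | k + 1, hi => exact ⟨k, by omega, hv⟩
      · intro h N
        obtain ⟨i, hi, hv⟩ := h N
        exact ⟨i + 1, by omega, hv⟩
    rwa [hSeq] at hacc

end AAPA

end Generic
lemma padWord_injective {σ : Type u} : Function.Injective (@padWord σ) := by
  intro x y h
  apply List.ext_getElem?
  intro i
  exact congrFun h i

lemma pcp_iff_inter {σ : Type} (I : List (List σ × List σ)) :
    PCPSolvable I ↔ (pcpL₁ I ∩ pcpL₂ σ).Nonempty := by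
  constructor
  · rintro ⟨js, hne, heq⟩
    refine ⟨fun _ => padWord ((js.map fun j => (I.get j).1).flatten), ?_, ?_⟩
    · exact ⟨js, hne, rfl, by rw [heq]⟩
    · exact ⟨(js.map fun j => (I.get j).1).flatten, rfl, rfl⟩
  · rintro ⟨w, ⟨js, hne, h0, h1⟩, ⟨v, h0', h1'⟩⟩
    refine ⟨js, hne, ?_⟩
    have e0 : (js.map fun j => (I.get j).1).flatten = v := padWord_injective (by rw [← h0, h0'])
    have e1 : (js.map fun j => (I.get j).2).flatten = v := padWord_injective (by rw [← h1, h1'])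
    rw [e0, e1]
section Aut2

variable {σ : Type}

/-- States of the automaton for `L₂`. -/
inductive St2 (σ : Type) : Type
  | cm2 : St2 σ
  | chk : σ → St2 σ
  | cend : St2 σ
  | b0 : St2 σ
  | b1 : St2 σ

open St2 PosBool

private def st2encode : St2 σ → Option σ × Fin 4
  | cm2 => (none, 0)
  | chk a => (some a, 0)
  | cend => (none, 1)
  | b0 => (none, 2)
  | b1 => (none, 3)

noncomputable instance [Fintype σ] : Fintype (St2 σ) := by
  have : Finite (St2 σ) := by
    refine Finite.of_injective st2encode ?_
    intro x y h
    cases x <;> cases y <;> simp [st2encode] at h <;> simp [h]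
  exact Fintype.ofFinite _

open Classical in
/-- The NAPA recognizing `L₂`. -/
noncomputable def aut2 (σ : Type) : AAPA (Option σ) (St2 σ) 2 where
  init := .var cm2
  trans q ℓ d :=
    match q with
    | cm2 => if d = 0 then (match ℓ with | some a => .var (chk a) | none => .var cend) else .ff
    | chk a => if d = 1 ∧ ℓ = some a then .var cm2 else .ff
    | cend => if d = 1 ∧ ℓ = none then .var b0 else .ff
    | b0 => if d = 0 ∧ ℓ = none then .var b1 else .ff
    | b1 => if d = 1 ∧ ℓ = none then .var b0 else .ff
  prio q := match q with
    | cm2 => 1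
    | chk _ => 1
    | _ => 0

lemma aut2_nondet : (aut2 σ).IsNondet := by
  constructor
  · exact IsDisj.var _
  · intro q a d
    rcases q with _ | a' | _ | _ | _ <;> rcases a with _ | b <;>
      simp only [aut2] <;> split <;> first | exact IsDisj.var _ | exact IsDisj.ff
lemma PosBool.sat_ite {Q : Type v} {P : Prop} {inst : Decidable P} {f : PosBool Q} {C : Set Q}
    (h : PosBool.Sat C (if P then f else .ff)) : P ∧ PosBool.Sat C f := by
  split at h
  · exact ⟨‹P›, h⟩
  · exact absurd h id

lemma PosBool.sat_var {Q : Type v} {q q' : Q} (h : PosBool.Sat {q'} (PosBool.var q)) :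
    q' = q := h.symm

/-- `b`-phase states of `aut2`. -/
def bph2 {σ : Type} : St2 σ → Prop := fun q => q = .cend ∨ q = .b0 ∨ q = .b1

/-- Invariant of `aut2` runs. -/
def Inv2 {σ : Type} (w : Fin 2 → ℕ → Option σ) (v : List σ) :
    St2 σ → (Fin 2 → ℕ) → Prop
  | .cm2, c => c 0 = v.length ∧ c 1 = v.length ∧
      (∀ i < c 0, w 0 i = v[i]?) ∧ (∀ i < c 1, w 1 i = v[i]?)
  | .chk a, c => c 0 = v.length + 1 ∧ c 1 = v.length ∧
      (∀ i < v.length, w 0 i = v[i]?) ∧ (∀ i < c 1, w 1 i = v[i]?) ∧ w 0 v.length = some a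
  | .cend, c => c 0 = v.length + 1 ∧ c 1 = v.length ∧
      (∀ i < c 0, w 0 i = v[i]?) ∧ (∀ i < c 1, w 1 i = v[i]?)
  | .b0, c => v.length ≤ c 0 ∧ v.length ≤ c 1 ∧
      (∀ i < c 0, w 0 i = v[i]?) ∧ (∀ i < c 1, w 1 i = v[i]?)
  | .b1, c => v.length ≤ c 0 ∧ v.length ≤ c 1 ∧
      (∀ i < c 0, w 0 i = v[i]?) ∧ (∀ i < c 1, w 1 i = v[i]?)

section Aut2Lang

open St2

variable {σ : Type} {w : Fin 2 → ℕ → Option σ}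

lemma inv2_bph {v : List σ} {q c} (hb : bph2 q) (h : Inv2 w v q c) :
    (∀ i < c 0, w 0 i = v[i]?) ∧ (∀ i < c 1, w 1 i = v[i]?) := by
  rcases hb with rfl | rfl | rfl
  · exact ⟨h.2.2.1, h.2.2.2⟩
  · exact ⟨h.2.2.1, h.2.2.2⟩
  · exact ⟨h.2.2.1, h.2.2.2⟩

lemma fin2_cases (d : Fin 2) : d = 0 ∨ d = 1 := by omega

lemma inv2_step {v : List σ} {q c q' c'} (h : Inv2 w v q c)
    (hs : AAPA.TStep (aut2 σ) w q c q' c') :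
    ∃ v', Inv2 w v' q' c' ∧ (bph2 q → v' = v ∧ bph2 q') := by
  obtain ⟨d, hc, hsat⟩ := hs
  have hupd0 : (Function.update c (0:Fin 2) (c 0 + 1)) 0 = c 0 + 1 := Function.update_self _ _ _
  have hupd01 : (Function.update c (0:Fin 2) (c 0 + 1)) 1 = c 1 := Function.update_of_ne (by decide) _ _
  have hupd1 : (Function.update c (1:Fin 2) (c 1 + 1)) 1 = c 1 + 1 := Function.update_self _ _ _
  have hupd10 : (Function.update c (1:Fin 2) (c 1 + 1)) 0 = c 0 := Function.update_of_ne (by decide) _ _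
  cases q with
  | cm2 =>
      obtain ⟨h0, h1, hw0, hw1⟩ := h
      simp only [aut2] at hsat
      rcases fin2_cases d with rfl | rfl
      · rw [if_pos rfl] at hsat
        subst hc
        rcases hℓ : w 0 (c 0) with _ | a <;> rw [hℓ] at hsat
        · -- none : go to cend
          have := PosBool.sat_var hsat
          subst this
          refine ⟨v, ⟨?_, ?_, ?_, ?_⟩, by rintro (h|h|h) <;> simp at h⟩
          · rw [hupd0, h0]
          · rw [hupd01, h1]
          · intro i hi
            rw [hupd0] at hi
            rcases Nat.lt_succ_iff_lt_or_eq.1 hi with hi | rfl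
            · exact hw0 i hi
            · rw [hℓ, h0, List.getElem?_eq_none (le_refl _)]
          · intro i hi; rw [hupd01] at hi; exact hw1 i hi
        · -- some a : go to chk a
          have := PosBool.sat_var hsat
          subst this
          refine ⟨v, ⟨?_, ?_, ?_, ?_, ?_⟩, by rintro (h|h|h) <;> simp at h⟩
          · rw [hupd0, h0]
          · rw [hupd01, h1]
          · intro i hi; exact hw0 i (by omega)
          · intro i hi; rw [hupd01] at hi; exact hw1 i hi
          · rw [← h0]; exact hℓ
      · rw [if_neg (by decide)] at hsat
        exact absurd hsat id
  | chk a =>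
      obtain ⟨h0, h1, hw0, hw1, ha⟩ := h
      simp only [aut2] at hsat
      obtain ⟨hP, hsat'⟩ := PosBool.sat_ite hsat
      obtain ⟨rfl, hℓ⟩ := hP
      have := PosBool.sat_var hsat'
      subst this
      subst hc
      refine ⟨v ++ [a], ⟨?_, ?_, ?_, ?_⟩, by rintro (h|h|h) <;> simp at h⟩
      · rw [hupd10, h0]; simp
      · rw [hupd1, h1]; simp
      · intro i hi
        rw [hupd10, h0] at hi
        rcases Nat.lt_succ_iff_lt_or_eq.1 hi with hi | rfl
        · rw [List.getElem?_append_left hi]; exact hw0 i hi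
        · rw [List.getElem?_concat_length]; exact ha
      · intro i hi
        rw [hupd1, h1] at hi
        rcases Nat.lt_succ_iff_lt_or_eq.1 hi with hi | rfl
        · rw [List.getElem?_append_left hi]; exact hw1 i (h1 ▸ hi)
        · rw [List.getElem?_concat_length, ← h1]; exact hℓ
  | cend =>
      obtain ⟨h0, h1, hw0, hw1⟩ := h
      simp only [aut2] at hsat
      obtain ⟨hP, hsat'⟩ := PosBool.sat_ite hsat
      obtain ⟨rfl, hℓ⟩ := hP
      have := PosBool.sat_var hsat'
      subst this
      subst hc
      refine ⟨v, ⟨?_, ?_, ?_, ?_⟩, fun _ => ⟨rfl, Or.inr (Or.inl rfl)⟩⟩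
      · rw [hupd10, h0]; omega
      · rw [hupd1, h1]; omega
      · intro i hi; rw [hupd10] at hi; exact hw0 i hi
      · intro i hi
        rw [hupd1] at hi
        rcases Nat.lt_succ_iff_lt_or_eq.1 hi with hi | rfl
        · exact hw1 i hi
        · rw [hℓ, h1, List.getElem?_eq_none (le_refl _)]
  | b0 =>
      obtain ⟨h0, h1, hw0, hw1⟩ := h
      simp only [aut2] at hsat
      obtain ⟨hP, hsat'⟩ := PosBool.sat_ite hsat
      obtain ⟨rfl, hℓ⟩ := hP
      have := PosBool.sat_var hsat'
      subst this
      subst hc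
      refine ⟨v, ⟨?_, ?_, ?_, ?_⟩, fun _ => ⟨rfl, Or.inr (Or.inr rfl)⟩⟩
      · rw [hupd0]; omega
      · rw [hupd01]; exact h1
      · intro i hi
        rw [hupd0] at hi
        rcases Nat.lt_succ_iff_lt_or_eq.1 hi with hi | rfl
        · exact hw0 i hi
        · rw [hℓ, List.getElem?_eq_none (by omega)]
      · intro i hi; rw [hupd01] at hi; exact hw1 i hi
  | b1 =>
      obtain ⟨h0, h1, hw0, hw1⟩ := h
      simp only [aut2] at hsat
      obtain ⟨hP, hsat'⟩ := PosBool.sat_ite hsat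
      obtain ⟨rfl, hℓ⟩ := hP
      have := PosBool.sat_var hsat'
      subst this
      subst hc
      refine ⟨v, ⟨?_, ?_, ?_, ?_⟩, fun _ => ⟨rfl, Or.inr (Or.inl rfl)⟩⟩
      · rw [hupd10]; exact h0
      · rw [hupd1]; omega
      · intro i hi; rw [hupd10] at hi; exact hw0 i hi
      · intro i hi
        rw [hupd1] at hi
        rcases Nat.lt_succ_iff_lt_or_eq.1 hi with hi | rfl
        · exact hw1 i hi
        · rw [hℓ, List.getElem?_eq_none (by omega)]

lemma aut2_stepdet {q c q' c'} (hs : AAPA.TStep (aut2 σ) w q c q' c') :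
    (q = cend → q' = b0 ∧ c' = Function.update c 1 (c 1 + 1)) ∧
    (q = b0 → q' = b1 ∧ c' = Function.update c 0 (c 0 + 1)) ∧
    (q = b1 → q' = b0 ∧ c' = Function.update c 1 (c 1 + 1)) := by
  obtain ⟨d, hc, hsat⟩ := hs
  refine ⟨?_, ?_, ?_⟩ <;> rintro rfl <;> simp only [aut2] at hsat <;>
    obtain ⟨hP, hsat'⟩ := PosBool.sat_ite hsat <;> obtain ⟨rfl, -⟩ := hP <;>
    exact ⟨PosBool.sat_var hsat', hc⟩

lemma aut2_sound (hw : w ∈ (aut2 σ).lang) : w ∈ pcpL₂ σ := by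
  obtain ⟨qs, c, hc0, hinit, hstep, hacc⟩ := AAPA.exists_trace aut2_nondet hw
  have hq0 : qs 0 = cm2 := PosBool.sat_var hinit
  have hbase : Inv2 w [] (qs 0) (c 0) := by
    rw [hq0, hc0]
    exact ⟨rfl, rfl, by intro i hi; simp at hi, by intro i hi; simp at hi⟩
  have hinv : ∀ k, ∃ v, Inv2 w v (qs k) (c k) := by
    intro k
    induction k with
    | zero => exact ⟨[], hbase⟩
    | succ k ih =>
        obtain ⟨v, hv⟩ := ih
        obtain ⟨v', hv', -⟩ := inv2_step hv (hstep k)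
        exact ⟨v', hv'⟩
  -- eventually in the b-phase
  have hN : ∃ N, bph2 (qs N) := by
    by_contra hno
    push_neg at hno
    have hp1 : ∀ k, (aut2 σ).prio (qs k) = 1 := by
      intro k
      rcases hq : qs k with _ | a | _ | _ | _
      · rfl
      · rfl
      all_goals exact absurd (by rw [hq]; first
          | exact Or.inl rfl | exact Or.inr (Or.inl rfl) | exact Or.inr (Or.inr rfl)) (hno k)
    have hS : {v : ℕ | ∀ N : ℕ, ∃ i : ℕ, N ≤ i ∧ (aut2 σ).prio (qs i) = v} = {1} := by
      ext x
      simp only [Set.mem_setOf_eq, Set.mem_singleton_iff]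
      constructor
      · intro h
        obtain ⟨i, -, hi⟩ := h 0
        rw [hp1 i] at hi; omega
      · rintro rfl N; exact ⟨N, le_rfl, hp1 N⟩
    rw [hS] at hacc
    have h1 : sInf ({1} : Set ℕ) = 1 := by
      have := Nat.sInf_mem (⟨1, rfl⟩ : ({1} : Set ℕ).Nonempty)
      simpa using this
    rw [h1] at hacc
    exact Nat.not_even_one hacc
  obtain ⟨N, hbN⟩ := hN
  obtain ⟨v, hvN⟩ := hinv N
  have hstay : ∀ m, Inv2 w v (qs (N + m)) (c (N + m)) ∧ bph2 (qs (N + m)) := by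
    intro m
    induction m with
    | zero => exact ⟨hvN, hbN⟩
    | succ m ih =>
        obtain ⟨v', hv', himp⟩ := inv2_step ih.1 (hstep (N + m))
        obtain ⟨rfl, hb'⟩ := himp ih.2
        rw [show N + (m+1) = N + m + 1 by omega]
        exact ⟨hv', hb'⟩
  -- counters grow
  have hgrow : ∀ m, c N 0 + m ≤ c (N + 2*m) 0 ∧ c N 1 + m ≤ c (N + 2*m) 1 := by
    intro m
    induction m with
    | zero => simp
    | succ m ih =>
        have hb := (hstay (2*m)).2
        have key : c (N + 2*m) 0 + 1 ≤ c (N + 2*m + 2) 0 ∧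
            c (N + 2*m) 1 + 1 ≤ c (N + 2*m + 2) 1 := by
          rcases hb with hq | hq | hq
          · obtain ⟨h1, -, -⟩ := aut2_stepdet (hstep (N + 2*m))
            obtain ⟨hq', hc'⟩ := h1 hq
            obtain ⟨-, h2, -⟩ := aut2_stepdet (hstep (N + 2*m + 1))
            obtain ⟨-, hc''⟩ := h2 hq'
            rw [hc'', hc']
            refine ⟨?_, ?_⟩ <;> simp [Function.update_apply] <;> omega
          · obtain ⟨-, h1, -⟩ := aut2_stepdet (hstep (N + 2*m))
            obtain ⟨hq', hc'⟩ := h1 hq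
            obtain ⟨-, -, h2⟩ := aut2_stepdet (hstep (N + 2*m + 1))
            obtain ⟨-, hc''⟩ := h2 hq'
            rw [hc'', hc']
            refine ⟨?_, ?_⟩ <;> simp [Function.update_apply] <;> omega
          · obtain ⟨-, -, h1⟩ := aut2_stepdet (hstep (N + 2*m))
            obtain ⟨hq', hc'⟩ := h1 hq
            obtain ⟨-, h2, -⟩ := aut2_stepdet (hstep (N + 2*m + 1))
            obtain ⟨-, hc''⟩ := h2 hq'
            rw [hc'', hc']
            refine ⟨?_, ?_⟩ <;> simp [Function.update_apply] <;> omega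
        rw [show N + 2*(m+1) = N + 2*m + 2 by omega]
        omega
  refine ⟨v, funext fun i => ?_, funext fun i => ?_⟩
  · have h := hstay (2*(i+1))
    have hg := (hgrow (i+1)).1
    exact (inv2_bph h.2 h.1).1 i (by omega)
  · have h := hstay (2*(i+1))
    have hg := (hgrow (i+1)).2
    exact (inv2_bph h.2 h.1).2 i (by omega)

end Aut2Lang
section Aut2Complete

open St2

variable {σ : Type} {w : Fin 2 → ℕ → Option σ}

/-- The state sequence of the canonical accepting run of `aut2` on `(v⊥^ω, v⊥^ω)`. -/
noncomputable def qseq2 (v : List σ) (k : ℕ) : St2 σ :=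
  if k ≤ 2 * v.length then
    (if k % 2 = 0 then cm2 else match v[k / 2]? with | some a => chk a | none => cend)
  else if k = 2 * v.length + 1 then cend
  else if k % 2 = 0 then b0 else b1

/-- The counter sequence of the canonical run. -/
def cseq2 (k : ℕ) : Fin 2 → ℕ := fun d => if d = 0 then (k + 1) / 2 else k / 2

lemma aut2_complete (hw : w ∈ pcpL₂ σ) : w ∈ (aut2 σ).lang := by
  classical
  obtain ⟨v, h0, h1⟩ := hw
  have hw0 : ∀ i, w 0 i = v[i]? := fun i => congrFun h0 i
  have hw1 : ∀ i, w 1 i = v[i]? := fun i => congrFun h1 i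
  refine AAPA.lang_of_trace (qseq2 v) cseq2 ?_ ?_ ?_ ?_
  · funext d
    rcases fin2_cases d with rfl | rfl <;> rfl
  · have : qseq2 v 0 = cm2 := by simp [qseq2]
    rw [this]
    exact rfl
  · intro k
    have hc0 : cseq2 k 0 = (k + 1) / 2 := rfl
    have hc1 : cseq2 k 1 = k / 2 := rfl
    rcases Nat.even_or_odd k with hk | hk
    · -- even step: direction 0
      have hk2 : k % 2 = 0 := Nat.even_iff.1 hk
      refine ⟨0, ?_, ?_⟩
      · funext d
        rcases fin2_cases d with rfl | rfl <;>
          simp [cseq2, Function.update_apply] <;> omega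
      · rcases lt_trichotomy k (2 * v.length) with hlt | heq | hgt
        · -- in the comparison phase, read a letter
          have hq : qseq2 v k = cm2 := by simp [qseq2, hk2]; omega
          have hd2 : k / 2 < v.length := by omega
          have hq' : qseq2 v (k + 1) = chk v[k/2] := by
            have h2 : (k+1) % 2 = 1 := by omega
            have h3 : (k+1) / 2 = k / 2 := by omega
            simp only [qseq2, if_pos (by omega : k + 1 ≤ 2 * v.length), h2, h3]
            rw [List.getElem?_eq_getElem hd2]
            simp
          rw [hq, hq']
          simp only [aut2, if_pos rfl]
          rw [hc0, show (k+1)/2 = k/2 by omega, hw0, List.getElem?_eq_getElem hd2]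
          exact rfl
        · -- end of word: read ⊥, go to cend
          have hq : qseq2 v k = cm2 := by simp [qseq2, hk2]; omega
          have hq' : qseq2 v (k + 1) = cend := by
            simp [qseq2, heq]
          rw [hq, hq']
          simp only [aut2, if_pos rfl]
          rw [hc0, show (k+1)/2 = v.length by omega, hw0,
            List.getElem?_eq_none (le_refl _)]
          exact rfl
        · -- b-phase: b0 → b1
          have hq : qseq2 v k = b0 := by
            have hn1 : ¬ k ≤ 2 * v.length := by omega
            have hn2 : k ≠ 2 * v.length + 1 := by omega
            simp [qseq2, hn1, hn2, hk2]
          have hq' : qseq2 v (k + 1) = b1 := by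
            have h2 : (k+1) % 2 = 1 := by omega
            have hn1 : ¬ k + 1 ≤ 2 * v.length := by omega
            have hn2 : k + 1 ≠ 2 * v.length + 1 := by omega
            simp [qseq2, hn1, hn2, h2]; omega
          rw [hq, hq']
          simp only [aut2]
          have hcond : w 0 (cseq2 k 0) = none := by
            rw [hc0, hw0]; exact List.getElem?_eq_none (by omega)
          rw [if_pos (by exact ⟨by trivial, hcond⟩)]
          exact rfl
    · -- odd step: direction 1
      have hk2 : k % 2 = 1 := Nat.odd_iff.1 hk
      refine ⟨1, ?_, ?_⟩
      · funext d
        rcases fin2_cases d with rfl | rfl <;>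
          simp [cseq2, Function.update_apply] <;> omega
      · rcases lt_trichotomy k (2 * v.length) with hlt | heq | hgt
        · -- chk → cm2
          have hd2 : k / 2 < v.length := by omega
          have hq : qseq2 v k = chk v[k/2] := by
            simp only [qseq2, if_pos (by omega : k ≤ 2 * v.length), hk2]
            rw [List.getElem?_eq_getElem hd2]
            simp
          have hq' : qseq2 v (k + 1) = cm2 := by
            have h2 : (k+1) % 2 = 0 := by omega
            have hp : k + 1 ≤ 2 * v.length := by omega
            simp [qseq2, hp, h2]
          rw [hq, hq']
          simp only [aut2]
          have hcond : w 1 (cseq2 k 1) = some v[k/2] := by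
            rw [hc1, hw1]; exact List.getElem?_eq_getElem hd2
          rw [if_pos (by exact ⟨by trivial, hcond⟩)]
          exact rfl
        · omega
        · -- cend → b0 or b1 → b0
          have hq' : qseq2 v (k + 1) = b0 := by
            have h2 : (k+1) % 2 = 0 := by omega
            have hn1 : ¬ k + 1 ≤ 2 * v.length := by omega
            have hn2 : k + 1 ≠ 2 * v.length + 1 := by omega
            simp [qseq2, hn1, hn2, h2]; omega
          rcases eq_or_lt_of_le (show 2 * v.length + 1 ≤ k by omega) with heq1 | hgt1
          · have hq : qseq2 v k = cend := by
              have hn1 : ¬ k ≤ 2 * v.length := by omega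
              have hp : k = 2 * v.length + 1 := heq1.symm
              simp [qseq2, hn1, hp]
            rw [hq, hq']
            simp only [aut2]
            have hcond : w 1 (cseq2 k 1) = none := by
              rw [hc1, hw1]; exact List.getElem?_eq_none (by omega)
            rw [if_pos (by exact ⟨by trivial, hcond⟩)]
            exact rfl
          · have hq : qseq2 v k = b1 := by
              have hn1 : ¬ k ≤ 2 * v.length := by omega
              have hn2 : k ≠ 2 * v.length + 1 := by omega
              simp [qseq2, hn1, hn2, hk2]
            rw [hq, hq']
            simp only [aut2]
            have hcond : w 1 (cseq2 k 1) = none := by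
              rw [hc1, hw1]; exact List.getElem?_eq_none (by omega)
            rw [if_pos (by exact ⟨by trivial, hcond⟩)]
            exact rfl
  · refine ⟨2 * v.length + 1, fun k hk => ?_⟩
    rcases eq_or_lt_of_le hk with rfl | hgt
    · simp [qseq2, aut2]
    · have h1 : ¬ k ≤ 2 * v.length := by omega
      have h2 : k ≠ 2 * v.length + 1 := by omega
      simp only [qseq2, if_neg h1, if_neg h2]
      split <;> rfl

lemma aut2_lang : (aut2 σ).lang = pcpL₂ σ :=
  Set.ext fun w => ⟨aut2_sound, aut2_complete⟩

end Aut2Complete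
section Aut1

variable {σ : Type}

/-- States of the automaton for `L₁`. -/
inductive St1 (σ : Type) : Type
  | pr : List σ → List σ → St1 σ
  | cend : St1 σ
  | b0 : St1 σ
  | b1 : St1 σ

/-- Valid states relative to a PCP instance. -/
def Valid1 (I : List (List σ × List σ)) : St1 σ → Prop
  | .pr x y => ∃ p ∈ I, (x <:+ p.1 ∧ y = p.2) ∨ (x = [] ∧ y <:+ p.2)
  | _ => True

variable {I : List (List σ × List σ)}

lemma valid1_tail1 {x y : List σ} (h : Valid1 I (.pr x y)) : Valid1 I (.pr x.tail y) := by
  obtain ⟨p, hp, h | h⟩ := h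
  · exact ⟨p, hp, Or.inl ⟨(List.tail_suffix x).trans h.1, h.2⟩⟩
  · exact ⟨p, hp, Or.inr ⟨by rw [h.1]; rfl, h.2⟩⟩

lemma valid1_tail2 {x y : List σ} (h : Valid1 I (.pr x y)) : Valid1 I (.pr [] y.tail) := by
  obtain ⟨p, hp, h | h⟩ := h
  · exact ⟨p, hp, Or.inr ⟨rfl, h.2 ▸ List.tail_suffix y⟩⟩
  · exact ⟨p, hp, Or.inr ⟨rfl, (List.tail_suffix y).trans h.2⟩⟩

lemma valid1_get (j : Fin I.length) : Valid1 I (.pr (I.get j).1 (I.get j).2) :=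
  ⟨I.get j, List.get_mem I j, Or.inl ⟨List.suffix_refl _, rfl⟩⟩

lemma valid1_start1 (j : Fin I.length) : Valid1 I (.pr (I.get j).1.tail (I.get j).2) :=
  ⟨I.get j, List.get_mem I j, Or.inl ⟨List.tail_suffix _, rfl⟩⟩

lemma valid1_start2 (j : Fin I.length) : Valid1 I (.pr [] (I.get j).2.tail) :=
  ⟨I.get j, List.get_mem I j, Or.inr ⟨rfl, List.tail_suffix _⟩⟩

lemma valid1_other {q : St1 σ} (h : q = .cend ∨ q = .b0 ∨ q = .b1) : Valid1 I q := by
  rcases h with rfl | rfl | rfl <;> trivial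

/-- The state set of the `L₁` automaton is finite. -/
lemma valid1_finite (I : List (List σ × List σ)) : {q : St1 σ | Valid1 I q}.Finite := by
  have hsub : {q : St1 σ | Valid1 I q} ⊆
      {St1.cend, St1.b0, St1.b1} ∪
      ⋃ p ∈ {p | p ∈ I}, (fun xy : List σ × List σ => St1.pr xy.1 xy.2) ''
        (({x | x <:+ p.1} ×ˢ {p.2}) ∪ ({([] : List σ)} ×ˢ {y | y <:+ p.2})) := by
    rintro q hq
    rcases q with ⟨x, y⟩ | _ | _ | _
    · obtain ⟨p, hp, h | h⟩ := hq
      · exact Or.inr (Set.mem_biUnion hp ⟨(x, y), Or.inl ⟨h.1, h.2⟩, rfl⟩)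
      · exact Or.inr (Set.mem_biUnion hp ⟨(x, y), Or.inr ⟨h.1, h.2⟩, rfl⟩)
    · exact Or.inl (Or.inl rfl)
    · exact Or.inl (Or.inr (Or.inl rfl))
    · exact Or.inl (Or.inr (Or.inr rfl))
  refine Set.Finite.subset ?_ hsub
  refine Set.Finite.union (by simp) ?_
  refine Set.Finite.biUnion (List.finite_toSet I) ?_
  intro p _
  refine Set.Finite.image _ (Set.Finite.union ?_ ?_)
  · refine Set.Finite.prod ?_ (Set.finite_singleton _)
    have : {x : List σ | x <:+ p.1} = {x | x ∈ p.1.tails} := by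
      ext x; simp [List.mem_tails]
    rw [this]
    exact List.finite_toSet _
  · refine Set.Finite.prod (Set.finite_singleton _) ?_
    have : {y : List σ | y <:+ p.2} = {y | y ∈ p.2.tails} := by
      ext y; simp [List.mem_tails]
    rw [this]
    exact List.finite_toSet _

open Classical in
/-- The "start a new tile `j`" disjunct of the transition at the middle state. -/
noncomputable def startOne (I : List (List σ × List σ)) (j : Fin I.length)
    (ℓ : Option σ) (d : Fin 2) : PosBool {q : St1 σ // Valid1 I q} :=
  .or
    (if d = 0 ∧ (I.get j).1 ≠ [] ∧ ℓ = (I.get j).1.head? then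
      .var ⟨.pr (I.get j).1.tail (I.get j).2, valid1_start1 j⟩ else .ff)
    (if d = 1 ∧ (I.get j).1 = [] ∧ (I.get j).2 ≠ [] ∧ ℓ = (I.get j).2.head? then
      .var ⟨.pr [] (I.get j).2.tail, valid1_start2 j⟩ else .ff)

/-- The disjunction over all tiles. -/
noncomputable def startF (I : List (List σ × List σ)) (ℓ : Option σ) (d : Fin 2) :
    PosBool {q : St1 σ // Valid1 I q} :=
  PosBool.bigOr (List.finRange I.length) fun j => startOne I j ℓ d

open Classical in
/-- The NAPA recognizing `L₁`. -/
noncomputable def aut1 (I : List (List σ × List σ)) :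
    AAPA (Option σ) {q : St1 σ // Valid1 I q} 2 where
  init := PosBool.bigOr (List.finRange I.length) fun j =>
    .var ⟨.pr (I.get j).1 (I.get j).2, valid1_get j⟩
  trans := fun q ℓ d =>
    match q with
    | ⟨.pr x y, h⟩ =>
      if hx : x = [] then
        (if y = [] then
          .or (startF I ℓ d)
            (if d = 0 ∧ ℓ = none then .var ⟨.cend, trivial⟩ else .ff)
        else if d = 1 ∧ ℓ = y.head? then .var ⟨.pr [] y.tail, valid1_tail2 h⟩ else .ff)
      else if d = 0 ∧ ℓ = x.head? then .var ⟨.pr x.tail y, valid1_tail1 h⟩ else .ff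
    | ⟨.cend, _⟩ => if d = 1 ∧ ℓ = none then .var ⟨.b0, trivial⟩ else .ff
    | ⟨.b0, _⟩ => if d = 0 ∧ ℓ = none then .var ⟨.b1, trivial⟩ else .ff
    | ⟨.b1, _⟩ => if d = 1 ∧ ℓ = none then .var ⟨.b0, trivial⟩ else .ff
  prio := fun q => match q.1 with
    | .pr _ _ => 1
    | _ => 0

lemma aut1_nondet : (aut1 I).IsNondet := by
  constructor
  · exact PosBool.isDisj_bigOr fun j _ => PosBool.IsDisj.var _
  · rintro ⟨q, hq⟩ ℓ d
    rcases q with ⟨x, y⟩ | _ | _ | _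
    · simp only [aut1]
      split
      · split
        · refine PosBool.IsDisj.or (PosBool.isDisj_bigOr fun j _ => ?_) ?_
          · refine PosBool.IsDisj.or ?_ ?_ <;> split <;>
              first | exact PosBool.IsDisj.var _ | exact PosBool.IsDisj.ff
          · split <;> first | exact PosBool.IsDisj.var _ | exact PosBool.IsDisj.ff
        · split <;> first | exact PosBool.IsDisj.var _ | exact PosBool.IsDisj.ff
      · split <;> first | exact PosBool.IsDisj.var _ | exact PosBool.IsDisj.ff
    all_goals simp only [aut1] <;> split <;>
      first | exact PosBool.IsDisj.var _ | exact PosBool.IsDisj.ff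

end Aut1
section Aut1Sound

variable {σ : Type} {I : List (List σ × List σ)} {w : Fin 2 → ℕ → Option σ}

/-- `b`-phase states of `aut1`. -/
def bph1 : St1 σ → Prop := fun q => q = .cend ∨ q = .b0 ∨ q = .b1

/-- Concatenation of the first components along an index sequence. -/
def flat1 (I : List (List σ × List σ)) (js : List (Fin I.length)) : List σ :=
  (js.map fun j => (I.get j).1).flatten

/-- Concatenation of the second components along an index sequence. -/
def flat2 (I : List (List σ × List σ)) (js : List (Fin I.length)) : List σ :=
  (js.map fun j => (I.get j).2).flatten

lemma flat1_append (js : List (Fin I.length)) (j : Fin I.length) :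
    flat1 I (js ++ [j]) = flat1 I js ++ (I.get j).1 := by
  simp [flat1]

lemma flat2_append (js : List (Fin I.length)) (j : Fin I.length) :
    flat2 I (js ++ [j]) = flat2 I js ++ (I.get j).2 := by
  simp [flat2]

/-- Invariant of `aut1` runs. -/
def Inv1 (w : Fin 2 → ℕ → Option σ) (I : List (List σ × List σ))
    (js : List (Fin I.length)) : St1 σ → (Fin 2 → ℕ) → Prop
  | .pr x y, c =>
      (flat1 I js).length = c 0 + x.length ∧ (flat2 I js).length = c 1 + y.length ∧
      (flat1 I js).drop (c 0) = x ∧ (flat2 I js).drop (c 1) = y ∧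
      (∀ i < c 0, w 0 i = (flat1 I js)[i]?) ∧ (∀ i < c 1, w 1 i = (flat2 I js)[i]?)
  | _, c =>
      (flat1 I js).length ≤ c 0 ∧ (flat2 I js).length ≤ c 1 ∧
      (∀ i < c 0, w 0 i = (flat1 I js)[i]?) ∧ (∀ i < c 1, w 1 i = (flat2 I js)[i]?)

lemma inv1_bph {js : List (Fin I.length)} {q c} (hb : bph1 q) (h : Inv1 w I js q c) :
    (∀ i < c 0, w 0 i = (flat1 I js)[i]?) ∧ (∀ i < c 1, w 1 i = (flat2 I js)[i]?) := by
  rcases hb with rfl | rfl | rfl <;> exact ⟨h.2.2.1, h.2.2.2⟩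

lemma inv1_step {js : List (Fin I.length)} {q q' : {q : St1 σ // Valid1 I q}}
    {c c' : Fin 2 → ℕ} (h : Inv1 w I js q.1 c)
    (hs : AAPA.TStep (aut1 I) w q c q' c') :
    ∃ js', Inv1 w I js' q'.1 c' ∧ (js ≠ [] → js' ≠ []) ∧
      (bph1 q.1 → js' = js ∧ bph1 q'.1) := by
  obtain ⟨d, hc, hsat⟩ := hs
  have hupd0 : (Function.update c (0:Fin 2) (c 0 + 1)) 0 = c 0 + 1 := Function.update_self _ _ _
  have hupd01 : (Function.update c (0:Fin 2) (c 0 + 1)) 1 = c 1 := Function.update_of_ne (by decide) _ _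
  have hupd1 : (Function.update c (1:Fin 2) (c 1 + 1)) 1 = c 1 + 1 := Function.update_self _ _ _
  have hupd10 : (Function.update c (1:Fin 2) (c 1 + 1)) 0 = c 0 := Function.update_of_ne (by decide) _ _
  obtain ⟨qv, hv⟩ := q
  rcases qv with ⟨x, y⟩ | _ | _ | _
  · obtain ⟨h0, h1, hd0, hd1, hw0, hw1⟩ := h
    simp only [aut1] at hsat
    by_cases hxe : x = []
    · subst hxe
      by_cases hye : y = []
      · subst hye
        rw [dif_pos rfl, if_pos rfl] at hsat
        simp only [List.length_nil, Nat.add_zero] at h0 h1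
        rcases hsat with hsat | hsat
        · -- start a new tile
          obtain ⟨j, -, hsat⟩ := PosBool.sat_bigOr.1 hsat
          rcases hsat with hsat | hsat
          · obtain ⟨hP, hsat'⟩ := PosBool.sat_ite hsat
            obtain ⟨rfl, hne, hℓ⟩ := hP
            have hq' := PosBool.sat_var hsat'
            subst hq'
            subst hc
            refine ⟨js ++ [j], ?_, fun _ => by simp, by rintro (h|h|h) <;> simp at h⟩
            rw [show (⟨St1.pr (I.get j).1.tail (I.get j).2, valid1_start1 j⟩ :
              {q : St1 σ // Valid1 I q}).1 = St1.pr (I.get j).1.tail (I.get j).2 from rfl]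
            refine ⟨?_, ?_, ?_, ?_, ?_, ?_⟩
            · rw [flat1_append, List.length_append, h0, hupd0, List.length_tail]
              have := List.length_pos_iff.2 hne
              omega
            · rw [flat2_append, List.length_append, h1, hupd01]
            · rw [flat1_append, hupd0, ← List.tail_drop]
              rw [show c 0 = (flat1 I js).length from h0.symm, List.drop_left]
            · rw [flat2_append, hupd01,
                show c 1 = (flat2 I js).length from h1.symm, List.drop_left]
            · intro i hi
              rw [hupd0] at hi
              rw [flat1_append]
              rcases Nat.lt_succ_iff_lt_or_eq.1 hi with hi | rfl
              · rw [List.getElem?_append_left (by omega : i < (flat1 I js).length)]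
                exact hw0 i hi
              · rw [List.getElem?_append_right (by omega), h0, Nat.sub_self,
                  ← List.head?_eq_getElem?]
                rw [← hℓ]
            · intro i hi
              rw [hupd01] at hi
              rw [flat2_append, List.getElem?_append_left (by omega : i < (flat2 I js).length)]
              exact hw1 i hi
          · obtain ⟨hP, hsat'⟩ := PosBool.sat_ite hsat
            obtain ⟨rfl, hwj, hne, hℓ⟩ := hP
            have hq' := PosBool.sat_var hsat'
            subst hq'
            subst hc
            refine ⟨js ++ [j], ?_, fun _ => by simp, by rintro (h|h|h) <;> simp at h⟩
            refine ⟨?_, ?_, ?_, ?_, ?_, ?_⟩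
            · rw [flat1_append, hwj, List.append_nil, h0, hupd10]; simp
            · rw [flat2_append, List.length_append, h1, hupd1, List.length_tail]
              have := List.length_pos_iff.2 hne
              omega
            · rw [flat1_append, hwj, List.append_nil, hupd10,
                show c 0 = (flat1 I js).length from h0.symm, List.drop_length]
            · rw [flat2_append, hupd1, ← List.tail_drop,
                show c 1 = (flat2 I js).length from h1.symm, List.drop_left]
            · intro i hi
              rw [hupd10] at hi
              rw [flat1_append, hwj, List.append_nil]
              exact hw0 i hi
            · intro i hi
              rw [hupd1] at hi
              rw [flat2_append]
              rcases Nat.lt_succ_iff_lt_or_eq.1 hi with hi | rfl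
              · rw [List.getElem?_append_left (by omega : i < (flat2 I js).length)]
                exact hw1 i hi
              · rw [List.getElem?_append_right (by omega), h1, Nat.sub_self,
                  ← List.head?_eq_getElem?]
                rw [← hℓ]
        · -- finish: go to cend
          obtain ⟨hP, hsat'⟩ := PosBool.sat_ite hsat
          obtain ⟨rfl, hℓ⟩ := hP
          have hq' := PosBool.sat_var hsat'
          subst hq'
          subst hc
          refine ⟨js, ⟨?_, ?_, ?_, ?_⟩, fun h => h, by rintro (h|h|h) <;> simp at h⟩
          · rw [hupd0]; omega
          · rw [hupd01]; omega
          · intro i hi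
            rw [hupd0] at hi
            rcases Nat.lt_succ_iff_lt_or_eq.1 hi with hi | rfl
            · exact hw0 i hi
            · rw [hℓ, List.getElem?_eq_none (by omega)]
          · intro i hi
            rw [hupd01] at hi
            exact hw1 i hi
      · -- consume a letter of the second component
        rw [dif_pos rfl, if_neg hye] at hsat
        obtain ⟨hP, hsat'⟩ := PosBool.sat_ite hsat
        obtain ⟨rfl, hℓ⟩ := hP
        have hq' := PosBool.sat_var hsat'
        subst hq'
        subst hc
        have hylen := List.length_pos_iff.2 hye
        refine ⟨js, ⟨?_, ?_, ?_, ?_, ?_, ?_⟩, fun h => h, by rintro (h|h|h) <;> simp at h⟩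
        · rw [hupd10]; simpa using h0
        · rw [hupd1, h1, List.length_tail]; omega
        · rw [hupd10]; simpa using hd0
        · rw [hupd1, ← List.tail_drop, hd1]
        · intro i hi
          rw [hupd10] at hi
          exact hw0 i hi
        · intro i hi
          rw [hupd1] at hi
          rcases Nat.lt_succ_iff_lt_or_eq.1 hi with hi | rfl
          · exact hw1 i hi
          · rw [hℓ, ← hd1, List.head?_drop]
    · -- consume a letter of the first component
      rw [dif_neg hxe] at hsat
      obtain ⟨hP, hsat'⟩ := PosBool.sat_ite hsat
      obtain ⟨rfl, hℓ⟩ := hP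
      have hq' := PosBool.sat_var hsat'
      subst hq'
      subst hc
      have hxlen := List.length_pos_iff.2 hxe
      refine ⟨js, ⟨?_, ?_, ?_, ?_, ?_, ?_⟩, fun h => h, by rintro (h|h|h) <;> simp at h⟩
      · rw [hupd0, h0, List.length_tail]; omega
      · rw [hupd01]; exact h1
      · rw [hupd0, ← List.tail_drop, hd0]
      · rw [hupd01]; exact hd1
      · intro i hi
        rw [hupd0] at hi
        rcases Nat.lt_succ_iff_lt_or_eq.1 hi with hi | rfl
        · exact hw0 i hi
        · rw [hℓ, ← hd0, List.head?_drop]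
      · intro i hi
        rw [hupd01] at hi
        exact hw1 i hi
  · -- cend
    obtain ⟨h0, h1, hw0, hw1⟩ := h
    simp only [aut1] at hsat
    obtain ⟨hP, hsat'⟩ := PosBool.sat_ite hsat
    obtain ⟨rfl, hℓ⟩ := hP
    have hq' := PosBool.sat_var hsat'
    subst hq'
    subst hc
    refine ⟨js, ⟨?_, ?_, ?_, ?_⟩, fun h => h,
      fun _ => ⟨rfl, Or.inr (Or.inl rfl)⟩⟩
    · rw [hupd10]; exact h0
    · rw [hupd1]; omega
    · intro i hi; rw [hupd10] at hi; exact hw0 i hi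
    · intro i hi
      rw [hupd1] at hi
      rcases Nat.lt_succ_iff_lt_or_eq.1 hi with hi | rfl
      · exact hw1 i hi
      · rw [hℓ, List.getElem?_eq_none (by omega)]
  · -- b0
    obtain ⟨h0, h1, hw0, hw1⟩ := h
    simp only [aut1] at hsat
    obtain ⟨hP, hsat'⟩ := PosBool.sat_ite hsat
    obtain ⟨rfl, hℓ⟩ := hP
    have hq' := PosBool.sat_var hsat'
    subst hq'
    subst hc
    refine ⟨js, ⟨?_, ?_, ?_, ?_⟩, fun h => h,
      fun _ => ⟨rfl, Or.inr (Or.inr rfl)⟩⟩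
    · rw [hupd0]; omega
    · rw [hupd01]; exact h1
    · intro i hi
      rw [hupd0] at hi
      rcases Nat.lt_succ_iff_lt_or_eq.1 hi with hi | rfl
      · exact hw0 i hi
      · rw [hℓ, List.getElem?_eq_none (by omega)]
    · intro i hi; rw [hupd01] at hi; exact hw1 i hi
  · -- b1
    obtain ⟨h0, h1, hw0, hw1⟩ := h
    simp only [aut1] at hsat
    obtain ⟨hP, hsat'⟩ := PosBool.sat_ite hsat
    obtain ⟨rfl, hℓ⟩ := hP
    have hq' := PosBool.sat_var hsat'
    subst hq'
    subst hc
    refine ⟨js, ⟨?_, ?_, ?_, ?_⟩, fun h => h,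
      fun _ => ⟨rfl, Or.inr (Or.inl rfl)⟩⟩
    · rw [hupd10]; exact h0
    · rw [hupd1]; omega
    · intro i hi; rw [hupd10] at hi; exact hw0 i hi
    · intro i hi
      rw [hupd1] at hi
      rcases Nat.lt_succ_iff_lt_or_eq.1 hi with hi | rfl
      · exact hw1 i hi
      · rw [hℓ, List.getElem?_eq_none (by omega)]

lemma aut1_stepdet {q q' : {q : St1 σ // Valid1 I q}} {c c'} 
    (hs : AAPA.TStep (aut1 I) w q c q' c') :
    (q.1 = .cend → q'.1 = .b0 ∧ c' = Function.update c 1 (c 1 + 1)) ∧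
    (q.1 = .b0 → q'.1 = .b1 ∧ c' = Function.update c 0 (c 0 + 1)) ∧
    (q.1 = .b1 → q'.1 = .b0 ∧ c' = Function.update c 1 (c 1 + 1)) := by
  obtain ⟨d, hc, hsat⟩ := hs
  obtain ⟨qv, hvq⟩ := q
  refine ⟨?_, ?_, ?_⟩ <;> intro hq <;> cases hq <;> simp only [aut1] at hsat <;>
    obtain ⟨hP, hsat'⟩ := PosBool.sat_ite hsat <;> obtain ⟨rfl, -⟩ := hP <;>
    exact ⟨congrArg Subtype.val (PosBool.sat_var hsat'), hc⟩

lemma aut1_sound (hw : w ∈ (aut1 I).lang) : w ∈ pcpL₁ I := by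
  obtain ⟨qs, c, hc0, hinit, hstep, hacc⟩ := AAPA.exists_trace aut1_nondet hw
  -- initial state
  obtain ⟨j0, -, hinit'⟩ := PosBool.sat_bigOr.1 hinit
  have hq0 := PosBool.sat_var hinit'
  have hbase : Inv1 w I [j0] (qs 0).1 (c 0) := by
    rw [hq0, hc0]
    refine ⟨by simp [flat1], by simp [flat2], by simp [flat1], by simp [flat2],
      by intro i hi; simp at hi, by intro i hi; simp at hi⟩
  have hinv : ∀ k, ∃ js, js ≠ [] ∧ Inv1 w I js (qs k).1 (c k) := by
    intro k
    induction k with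
    | zero => exact ⟨[j0], by simp, hbase⟩
    | succ k ih =>
        obtain ⟨js, hne, hv⟩ := ih
        obtain ⟨js', hv', hne', -⟩ := inv1_step hv (hstep k)
        exact ⟨js', hne' hne, hv'⟩
  -- eventually in the b-phase
  have hN : ∃ N, bph1 (qs N).1 := by
    by_contra hno
    push_neg at hno
    have hp1 : ∀ k, (aut1 I).prio (qs k) = 1 := by
      intro k
      rcases hq : (qs k).1 with ⟨x, y⟩ | _ | _ | _
      · simp only [aut1, hq]
      all_goals exact absurd (by rw [hq]; first
          | exact Or.inl rfl | exact Or.inr (Or.inl rfl) | exact Or.inr (Or.inr rfl)) (hno k)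
    have hS : {v : ℕ | ∀ N : ℕ, ∃ i : ℕ, N ≤ i ∧ (aut1 I).prio (qs i) = v} = {1} := by
      ext x
      simp only [Set.mem_setOf_eq, Set.mem_singleton_iff]
      constructor
      · intro h
        obtain ⟨i, -, hi⟩ := h 0
        rw [hp1 i] at hi; omega
      · rintro rfl N; exact ⟨N, le_rfl, hp1 N⟩
    rw [hS] at hacc
    have h1 : sInf ({1} : Set ℕ) = 1 := by
      have := Nat.sInf_mem (⟨1, rfl⟩ : ({1} : Set ℕ).Nonempty)
      simpa using this
    rw [h1] at hacc
    exact Nat.not_even_one hacc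
  obtain ⟨N, hbN⟩ := hN
  obtain ⟨js, hjne, hvN⟩ := hinv N
  have hstay : ∀ m, Inv1 w I js (qs (N + m)).1 (c (N + m)) ∧ bph1 (qs (N + m)).1 := by
    intro m
    induction m with
    | zero => exact ⟨hvN, hbN⟩
    | succ m ih =>
        obtain ⟨js', hv', -, himp⟩ := inv1_step ih.1 (hstep (N + m))
        obtain ⟨rfl, hb'⟩ := himp ih.2
        rw [show N + (m+1) = N + m + 1 by omega]
        exact ⟨hv', hb'⟩
  have hgrow : ∀ m, c N 0 + m ≤ c (N + 2*m) 0 ∧ c N 1 + m ≤ c (N + 2*m) 1 := by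
    intro m
    induction m with
    | zero => simp
    | succ m ih =>
        have hb := (hstay (2*m)).2
        have key : c (N + 2*m) 0 + 1 ≤ c (N + 2*m + 2) 0 ∧
            c (N + 2*m) 1 + 1 ≤ c (N + 2*m + 2) 1 := by
          rcases hb with hq | hq | hq
          · obtain ⟨h1', -, -⟩ := aut1_stepdet (hstep (N + 2*m))
            obtain ⟨hq', hc'⟩ := h1' hq
            obtain ⟨-, h2', -⟩ := aut1_stepdet (hstep (N + 2*m + 1))
            obtain ⟨-, hc''⟩ := h2' hq'
            rw [hc'', hc']
            refine ⟨?_, ?_⟩ <;> simp [Function.update_apply] <;> omega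
          · obtain ⟨-, h1', -⟩ := aut1_stepdet (hstep (N + 2*m))
            obtain ⟨hq', hc'⟩ := h1' hq
            obtain ⟨-, -, h2'⟩ := aut1_stepdet (hstep (N + 2*m + 1))
            obtain ⟨-, hc''⟩ := h2' hq'
            rw [hc'', hc']
            refine ⟨?_, ?_⟩ <;> simp [Function.update_apply] <;> omega
          · obtain ⟨-, -, h1'⟩ := aut1_stepdet (hstep (N + 2*m))
            obtain ⟨hq', hc'⟩ := h1' hq
            obtain ⟨-, h2', -⟩ := aut1_stepdet (hstep (N + 2*m + 1))
            obtain ⟨-, hc''⟩ := h2' hq'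
            rw [hc'', hc']
            refine ⟨?_, ?_⟩ <;> simp [Function.update_apply] <;> omega
        rw [show N + 2*(m+1) = N + 2*m + 2 by omega]
        omega
  refine ⟨js, hjne, funext fun i => ?_, funext fun i => ?_⟩
  · have h := hstay (2*(i+1))
    have hg := (hgrow (i+1)).1
    exact (inv1_bph h.2 h.1).1 i (by omega)
  · have h := hstay (2*(i+1))
    have hg := (hgrow (i+1)).2
    exact (inv1_bph h.2 h.1).2 i (by omega)

end Aut1Sound
section GoodFrom

variable {σ : Type u} {Q : Type v} {n : ℕ} {A : AAPA σ Q n} {w : Fin n → ℕ → σ}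

/-- From state `q` with counters `c` there is an infinite trace with eventually
zero priorities. -/
def AAPA.GoodFrom (A : AAPA σ Q n) (w : Fin n → ℕ → σ) (q : Q) (c : Fin n → ℕ) : Prop :=
  ∃ (qs : ℕ → Q) (cs : ℕ → Fin n → ℕ), qs 0 = q ∧ cs 0 = c ∧
    (∀ k, A.TStep w (qs k) (cs k) (qs (k + 1)) (cs (k + 1))) ∧
    ∃ M, ∀ k, M ≤ k → A.prio (qs k) = 0

lemma AAPA.GoodFrom.of_step {q c q' c'} (h : A.TStep w q c q' c')
    (hg : A.GoodFrom w q' c') : A.GoodFrom w q c := by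
  obtain ⟨qs, cs, h0, hc, hs, M, hM⟩ := hg
  refine ⟨fun k => match k with | 0 => q | k + 1 => qs k,
    fun k => match k with | 0 => c | k + 1 => cs k, rfl, rfl, ?_, M + 1, ?_⟩
  · intro k
    match k with
    | 0 =>
        show A.TStep w q c (qs 0) (cs 0)
        rw [h0, hc]; exact h
    | k + 1 => exact hs k
  · intro k hk
    match k, hk with
    | k + 1, hk => exact hM k (by omega)

lemma AAPA.lang_of_good {q : Q} (hinit : PosBool.Sat {q} A.init)
    (hg : A.GoodFrom w q 0) : w ∈ A.lang := by
  obtain ⟨qs, cs, h0, hc, hs, hM⟩ := hg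
  exact AAPA.lang_of_trace qs cs hc (h0 ▸ hinit) hs hM

end GoodFrom

section Aut1Complete

variable {σ : Type} {I : List (List σ × List σ)} {w : Fin 2 → ℕ → Option σ}

/-- The `b0`/`b1` loop is good when both words are `⊥` from the counters onwards. -/
lemma good_b0 {c : Fin 2 → ℕ} (h0 : ∀ i, c 0 ≤ i → w 0 i = none)
    (h1 : ∀ i, c 1 ≤ i → w 1 i = none) :
    (aut1 I).GoodFrom w ⟨.b0, trivial⟩ c := by
  refine ⟨fun k => if k % 2 = 0 then ⟨.b0, trivial⟩ else ⟨.b1, trivial⟩,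
    fun k d => if d = 0 then c 0 + (k + 1) / 2 else c 1 + k / 2,
    by simp, ?_, ?_, 0, ?_⟩
  · funext d
    rcases fin2_cases d with rfl | rfl <;> simp
  · intro k
    rcases Nat.even_or_odd k with hk | hk
    · have hk2 : k % 2 = 0 := Nat.even_iff.1 hk
      refine ⟨0, ?_, ?_⟩
      · funext d
        rcases fin2_cases d with rfl | rfl <;> simp [Function.update_apply] <;> omega
      · beta_reduce
        rw [if_pos hk2, if_neg (by omega : ¬ (k+1) % 2 = 0)]
        simp only [aut1]
        have hcond : w 0 (if (0:Fin 2) = 0 then c 0 + (k + 1) / 2 else c 1 + k / 2) = none := by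
          rw [if_pos rfl]; exact h0 _ (by omega)
        rw [if_pos (by exact ⟨by trivial, hcond⟩)]
        exact rfl
    · have hk2 : k % 2 = 1 := Nat.odd_iff.1 hk
      refine ⟨1, ?_, ?_⟩
      · funext d
        rcases fin2_cases d with rfl | rfl <;> simp [Function.update_apply] <;> omega
      · beta_reduce
        rw [if_neg (by omega : ¬ k % 2 = 0), if_pos (by omega : (k+1) % 2 = 0)]
        simp only [aut1]
        have hcond : w 1 (if (1:Fin 2) = 0 then c 0 + (k + 1) / 2 else c 1 + k / 2) = none := by
          rw [if_neg (by decide)]; exact h1 _ (by omega)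
        rw [if_pos (by exact ⟨by trivial, hcond⟩)]
        exact rfl
  · intro k hk
    by_cases h : k % 2 = 0 <;> simp [aut1, h]

lemma good_cend {c : Fin 2 → ℕ} (h0 : ∀ i, c 0 ≤ i → w 0 i = none)
    (h1 : ∀ i, c 1 ≤ i → w 1 i = none) :
    (aut1 I).GoodFrom w ⟨.cend, trivial⟩ c := by
  refine AAPA.GoodFrom.of_step (q' := ⟨.b0, trivial⟩)
    (c' := Function.update c 1 (c 1 + 1)) ⟨1, rfl, ?_⟩ ?_
  · simp only [aut1]
    rw [if_pos (by exact ⟨by trivial, h1 _ le_rfl⟩)]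
    exact rfl
  · refine good_b0 (fun i hi => h0 i ?_) (fun i hi => h1 i ?_)
    · rwa [Function.update_of_ne (by decide)] at hi
    · rw [Function.update_self] at hi; omega

end Aut1Complete
section Aut1Complete2

variable {σ : Type} {I : List (List σ × List σ)} {w : Fin 2 → ℕ → Option σ}

lemma valid1_mid {x y : List σ} (h : Valid1 I (.pr x y)) : Valid1 I (.pr [] []) := by
  obtain ⟨p, hp, -⟩ := h
  exact ⟨p, hp, Or.inr ⟨rfl, List.nil_suffix⟩⟩

lemma good_congr {q : {q : St1 σ // Valid1 I q}} {c c' : Fin 2 → ℕ}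
    (h : (aut1 I).GoodFrom w q c) (hc : c = c') : (aut1 I).GoodFrom w q c' := hc ▸ h

lemma good_pr2 (y : List σ) (h : Valid1 I (.pr [] y)) (c : Fin 2 → ℕ)
    (hy : ∀ i < y.length, w 1 (c 1 + i) = y[i]?)
    (hmid : ∀ hv : Valid1 I (.pr [] []), (aut1 I).GoodFrom w ⟨.pr [] [], hv⟩
      (fun d => if d = 0 then c 0 else c 1 + y.length)) :
    (aut1 I).GoodFrom w ⟨.pr [] y, h⟩ c := by
  induction y generalizing c with
  | nil =>
      refine good_congr (hmid (valid1_mid h)) ?_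
      funext d
      rcases fin2_cases d with rfl | rfl <;> simp
  | cons b y' ih =>
      refine AAPA.GoodFrom.of_step (q' := ⟨.pr [] y', valid1_tail2 h⟩)
        (c' := Function.update c 1 (c 1 + 1)) ⟨1, rfl, ?_⟩ ?_
      · simp only [aut1]
        rw [dif_pos (by trivial), if_neg (by simp : ¬ (b :: y') = [])]
        have hcond : w 1 (c 1) = (b :: y').head? := by
          have := hy 0 (by simp)
          simpa using this
        rw [if_pos (by exact ⟨by trivial, hcond⟩)]
        exact rfl
      · refine good_congr (ih (valid1_tail2 h) (Function.update c 1 (c 1 + 1)) ?_ ?_) rfl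
        · intro i hi
          rw [Function.update_self, show c 1 + 1 + i = c 1 + (i + 1) by omega]
          exact (hy (i + 1) (by simp; omega)).trans List.getElem?_cons_succ
        · intro hv
          refine good_congr (hmid hv) ?_
          funext d
          rcases fin2_cases d with rfl | rfl
          · rw [if_pos rfl, if_pos rfl, Function.update_of_ne (by decide)]
          · rw [if_neg (by decide), if_neg (by decide), Function.update_self]
            simp; omega

lemma good_pr (x y : List σ) (h : Valid1 I (.pr x y)) (c : Fin 2 → ℕ)
    (hx : ∀ i < x.length, w 0 (c 0 + i) = x[i]?)
    (hy : ∀ i < y.length, w 1 (c 1 + i) = y[i]?)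
    (hmid : ∀ hv : Valid1 I (.pr [] []), (aut1 I).GoodFrom w ⟨.pr [] [], hv⟩
      (fun d => if d = 0 then c 0 + x.length else c 1 + y.length)) :
    (aut1 I).GoodFrom w ⟨.pr x y, h⟩ c := by
  induction x generalizing c with
  | nil =>
      refine good_pr2 y h c hy fun hv => good_congr (hmid hv) ?_
      funext d
      rcases fin2_cases d with rfl | rfl <;> simp
  | cons a x' ih =>
      refine AAPA.GoodFrom.of_step (q' := ⟨.pr x' y, valid1_tail1 h⟩)
        (c' := Function.update c 0 (c 0 + 1)) ⟨0, rfl, ?_⟩ ?_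
      · simp only [aut1]
        rw [dif_neg (by simp : ¬ (a :: x') = [])]
        have hcond : w 0 (c 0) = (a :: x').head? := by
          have := hx 0 (by simp)
          simpa using this
        rw [if_pos (by exact ⟨by trivial, hcond⟩)]
        exact rfl
      · refine ih (valid1_tail1 h) (Function.update c 0 (c 0 + 1)) ?_ ?_ ?_
        · intro i hi
          rw [Function.update_self, show c 0 + 1 + i = c 0 + (i + 1) by omega]
          exact (hx (i + 1) (by simp; omega)).trans List.getElem?_cons_succ
        · intro i hi
          rw [Function.update_of_ne (by decide)]
          exact hy i hi
        · intro hv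
          refine good_congr (hmid hv) ?_
          funext d
          rcases fin2_cases d with rfl | rfl
          · rw [if_pos rfl, if_pos rfl, Function.update_self]
            simp; omega
          · rw [if_neg (by decide), if_neg (by decide), Function.update_of_ne (by decide)]

lemma flat1_cons (j : Fin I.length) (rest : List (Fin I.length)) :
    flat1 I (j :: rest) = (I.get j).1 ++ flat1 I rest := by simp [flat1]

lemma flat2_cons (j : Fin I.length) (rest : List (Fin I.length)) :
    flat2 I (j :: rest) = (I.get j).2 ++ flat2 I rest := by simp [flat2]
section Aut1Complete3

variable {σ : Type} {I : List (List σ × List σ)} {w : Fin 2 → ℕ → Option σ}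

lemma good_mid {c : Fin 2 → ℕ} (hval : Valid1 I (.pr [] []))
    (js : List (Fin I.length))
    (h0 : ∀ i, w 0 (c 0 + i) = (flat1 I js)[i]?)
    (h1 : ∀ i, w 1 (c 1 + i) = (flat2 I js)[i]?) :
    (aut1 I).GoodFrom w ⟨.pr [] [], hval⟩ c := by
  induction js generalizing c with
  | nil =>
      have hn0 : ∀ i, c 0 ≤ i → w 0 i = none := by
        intro i hi
        have := h0 (i - c 0)
        rw [show c 0 + (i - c 0) = i by omega] at this
        simpa [flat1] using this
      have hn1 : ∀ i, c 1 ≤ i → w 1 i = none := by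
        intro i hi
        have := h1 (i - c 1)
        rw [show c 1 + (i - c 1) = i by omega] at this
        simpa [flat2] using this
      refine AAPA.GoodFrom.of_step (q' := ⟨.cend, trivial⟩)
        (c' := Function.update c 0 (c 0 + 1)) ⟨0, rfl, ?_⟩ ?_
      · simp only [aut1]
        rw [dif_pos (by trivial), if_pos (by trivial)]
        refine Or.inr ?_
        rw [if_pos (by exact ⟨by trivial, hn0 _ le_rfl⟩)]
        exact rfl
      · refine good_cend (fun i hi => hn0 i ?_) (fun i hi => hn1 i ?_)
        · rw [Function.update_self] at hi; omega
        · rwa [Function.update_of_ne (by decide)] at hi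
  | cons j rest ih =>
      by_cases hx : (I.get j).1 = []
      · by_cases hy2 : (I.get j).2 = []
        · refine ih ?_ ?_
          · intro i
            have := h0 i
            rwa [flat1_cons, hx, List.nil_append] at this
          · intro i
            have := h1 i
            rwa [flat2_cons, hy2, List.nil_append] at this
        · -- start tile consuming first letter of second component
          have hylen := List.length_pos_iff.2 hy2
          have hℓ : w 1 (c 1) = (I.get j).2.head? := by
            have := h1 0
            rw [Nat.add_zero] at this
            rw [this, flat2_cons, List.getElem?_append_left hylen,
              ← List.head?_eq_getElem?]
          refine AAPA.GoodFrom.of_step (q' := ⟨.pr [] (I.get j).2.tail, valid1_start2 j⟩)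
            (c' := Function.update c 1 (c 1 + 1)) ⟨1, rfl, ?_⟩ ?_
          · simp only [aut1]
            rw [dif_pos (by trivial), if_pos (by trivial)]
            refine Or.inl ?_
            simp only [startF]
            refine PosBool.sat_bigOr.2 ⟨j, List.mem_finRange j, ?_⟩
            simp only [startOne]
            refine Or.inr ?_
            rw [if_pos (by exact ⟨by trivial, hx, hy2, hℓ⟩)]
            exact rfl
          · refine good_pr2 (I.get j).2.tail (valid1_start2 j) _ ?_ ?_
            · intro i hi
              rw [Function.update_self, show c 1 + 1 + i = c 1 + (1 + i) by omega]
              have := h1 (1 + i)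
              rw [this, flat2_cons, List.getElem?_append_left
                (by rw [List.length_tail] at hi; omega), List.getElem?_tail]
              congr 1
              omega
            · intro hv
              refine good_congr (ih (c := fun d => if d = 0 then c 0 else
                c 1 + (I.get j).2.length) ?_ ?_) ?_
              · intro i
                have := h0 i
                rwa [flat1_cons, hx, List.nil_append] at this
              · intro i
                beta_reduce
                rw [if_neg (by decide : ¬ (1:Fin 2) = 0)]
                have := h1 ((I.get j).2.length + i)
                rw [show c 1 + ((I.get j).2.length + i) =
                  c 1 + (I.get j).2.length + i by omega] at this
                rw [this, flat2_cons, List.getElem?_append_right (by omega)]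
                congr 1
                omega
              · funext d
                rcases fin2_cases d with rfl | rfl
                · rw [if_pos rfl, if_pos rfl, Function.update_of_ne (by decide)]
                · rw [if_neg (by decide), if_neg (by decide), Function.update_self,
                    List.length_tail]
                  omega
      · -- start tile consuming first letter of first component
        have hxlen := List.length_pos_iff.2 hx
        have hℓ : w 0 (c 0) = (I.get j).1.head? := by
          have := h0 0
          rw [Nat.add_zero] at this
          rw [this, flat1_cons, List.getElem?_append_left hxlen,
            ← List.head?_eq_getElem?]
        refine AAPA.GoodFrom.of_step (q' := ⟨.pr (I.get j).1.tail (I.get j).2, valid1_start1 j⟩)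
          (c' := Function.update c 0 (c 0 + 1)) ⟨0, rfl, ?_⟩ ?_
        · simp only [aut1]
          rw [dif_pos (by trivial), if_pos (by trivial)]
          refine Or.inl ?_
          simp only [startF]
          refine PosBool.sat_bigOr.2 ⟨j, List.mem_finRange j, ?_⟩
          simp only [startOne]
          refine Or.inl ?_
          rw [if_pos (by exact ⟨by trivial, hx, hℓ⟩)]
          exact rfl
        · refine good_pr (I.get j).1.tail (I.get j).2 (valid1_start1 j) _ ?_ ?_ ?_
          · intro i hi
            rw [Function.update_self, show c 0 + 1 + i = c 0 + (1 + i) by omega]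
            have := h0 (1 + i)
            rw [this, flat1_cons, List.getElem?_append_left
              (by rw [List.length_tail] at hi; omega), List.getElem?_tail]
            congr 1
            omega
          · intro i hi
            rw [Function.update_of_ne (by decide)]
            have := h1 i
            rw [this, flat2_cons, List.getElem?_append_left hi]
          · intro hv
            refine good_congr (ih (c := fun d => if d = 0 then c 0 + (I.get j).1.length else
              c 1 + (I.get j).2.length) ?_ ?_) ?_
            · intro i
              beta_reduce
              rw [if_pos (by rfl : (0:Fin 2) = 0)]
              have := h0 ((I.get j).1.length + i)
              rw [show c 0 + ((I.get j).1.length + i) =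
                c 0 + (I.get j).1.length + i by omega] at this
              rw [this, flat1_cons, List.getElem?_append_right (by omega)]
              congr 1
              omega
            · intro i
              beta_reduce
              rw [if_neg (by decide : ¬ (1:Fin 2) = 0)]
              have := h1 ((I.get j).2.length + i)
              rw [show c 1 + ((I.get j).2.length + i) =
                c 1 + (I.get j).2.length + i by omega] at this
              rw [this, flat2_cons, List.getElem?_append_right (by omega)]
              congr 1
              omega
            · funext d
              rcases fin2_cases d with rfl | rfl
              · rw [if_pos rfl, if_pos rfl, Function.update_self, List.length_tail]
                omega
              · rw [if_neg (by decide), if_neg (by decide),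
                  Function.update_of_ne (by decide)]

lemma aut1_complete (hw : w ∈ pcpL₁ I) : w ∈ (aut1 I).lang := by
  obtain ⟨js, hne, h0, h1⟩ := hw
  have hw0 : ∀ i, w 0 i = (flat1 I js)[i]? := fun i => congrFun h0 i
  have hw1 : ∀ i, w 1 i = (flat2 I js)[i]? := fun i => congrFun h1 i
  rcases js with _ | ⟨j, rest⟩
  · exact absurd rfl hne
  refine AAPA.lang_of_good (q := ⟨.pr (I.get j).1 (I.get j).2, valid1_get j⟩) ?_ ?_
  · refine PosBool.sat_bigOr.2 ⟨j, List.mem_finRange j, ?_⟩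
    exact rfl
  · refine good_pr (I.get j).1 (I.get j).2 (valid1_get j) 0 ?_ ?_ ?_
    · intro i hi
      have := hw0 i
      rw [show (0 : Fin 2 → ℕ) 0 + i = i from by simp, this, flat1_cons,
        List.getElem?_append_left hi]
    · intro i hi
      have := hw1 i
      rw [show (0 : Fin 2 → ℕ) 1 + i = i from by simp, this, flat2_cons,
        List.getElem?_append_left hi]
    · intro hv
      refine good_mid hv rest ?_ ?_
      · intro i
        rw [if_pos (by rfl : (0:Fin 2) = 0), show (0 : Fin 2 → ℕ) 0 + (I.get j).1.length + i =
          (I.get j).1.length + i from by simp]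
        rw [hw0 ((I.get j).1.length + i), flat1_cons,
          List.getElem?_append_right (by omega)]
        congr 1
        omega
      · intro i
        rw [if_neg (by decide : ¬ (1:Fin 2) = 0), show (0 : Fin 2 → ℕ) 1 + (I.get j).2.length + i =
          (I.get j).2.length + i from by simp]
        rw [hw1 ((I.get j).2.length + i), flat2_cons,
          List.getElem?_append_right (by omega)]
        congr 1
        omega

lemma aut1_lang : (aut1 I).lang = pcpL₁ I :=
  Set.ext fun w => ⟨aut1_sound, aut1_complete⟩

end Aut1Complete3
/-- For a PCP instance `I` over `σ` and the fresh symbol `⊥` (here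
`none` in `Option σ`): (i) the languages `L₁` and `L₂` are each recognized by a NAPA
over `σ ∪ {⊥}` with two directions, and (ii) `I` has a solution iff `L₁ ∩ L₂ ≠ ∅`. -/
theorem pcp_languages_napa_and_intersection
    (σ : Type) [Fintype σ] (I : List (List σ × List σ)) :
    (∃ (Q₁ : Type) (_ : Fintype Q₁) (_ : Nonempty Q₁) (A₁ : AAPA (Option σ) Q₁ 2),
        A₁.IsNondet ∧ A₁.lang = pcpL₁ I) ∧
    (∃ (Q₂ : Type) (_ : Fintype Q₂) (_ : Nonempty Q₂) (A₂ : AAPA (Option σ) Q₂ 2),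
        A₂.IsNondet ∧ A₂.lang = pcpL₂ σ) ∧
    (PCPSolvable I ↔ (pcpL₁ I ∩ pcpL₂ σ).Nonempty) := by
  refine ⟨?_, ?_, pcp_iff_inter I⟩
  · exact ⟨{q : St1 σ // Valid1 I q}, (valid1_finite I).fintype,
      ⟨⟨.b0, valid1_other (Or.inr (Or.inl rfl))⟩⟩, aut1 I, aut1_nondet, aut1_lang⟩
  · exact ⟨St2 σ, inferInstance, ⟨.cm2⟩, aut2 σ, aut2_nondet, aut2_lang⟩
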